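/- arXiv:1610.02207 — 3 statements merged into one kernel-verified Lean document; each statement's English description precedes it below -/
import Mathlib

section
/- Let d be a positive integer and let λ = (λ_1, …, λ_d) be a vector with strictly positive entries. Let (T_n) be a sequence of real-valued random variables converging in distribution to Σ_{j=1}^d λ_j Z_j², where Z_1, …, Z_d are independent standard normal random variables, and let (λ̂_n) be a sequence of random vectors in ℝ^d converging in probability to λ. Define p̂_n = 1 − H(T_n; λ̂_n). Then p̂_n converges in distribution to the uniform distribution on [0,1]. -/
open MeasureTheory ProbabilityTheory Filter

/-- The product of `d` independent standard normal distributions. -/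
noncomputable def stdGaussPi (d : ℕ) : Measure (Fin d → ℝ) :=
  Measure.pi fun _ => gaussianReal 0 1

/-- `mixCDF d lam q = H(q; λ) = P(∑ j, λ_j Z_j² ≤ q)` for `Z_1, …, Z_d` IID standard normal. -/
noncomputable def mixCDF (d : ℕ) (lam : Fin d → ℝ) (q : ℝ) : ℝ :=
  (stdGaussPi d {z | ∑ j, lam j * z j ^ 2 ≤ q}).toReal

/-- The law of the weighted chi-square mixture `∑ j, λ_j Z_j²`. -/
noncomputable def mixLaw (d : ℕ) (lam : Fin d → ℝ) : Measure ℝ :=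
  (stdGaussPi d).map fun z => ∑ j, lam j * z j ^ 2

/-! ### Auxiliary lemmas -/

instance (d : ℕ) : IsProbabilityMeasure (stdGaussPi d) := by unfold stdGaussPi; infer_instance

namespace Stmt2Aux

open Set

lemma gauss_sq_null (a c : ℝ) (ha : a ≠ 0) : gaussianReal 0 1 {x : ℝ | a * x ^ 2 = c} = 0 := by
  have h1 : {x : ℝ | a * x ^ 2 = c} ⊆ {Real.sqrt (c / a), -Real.sqrt (c / a)} := by
    intro x hx
    simp only [Set.mem_setOf_eq] at hx
    have hx2 : x ^ 2 = c / a := by field_simp [← hx]; linarith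
    have : Real.sqrt (c / a) = |x| := by rw [← hx2, Real.sqrt_sq_eq_abs]
    rcases (abs_eq (Real.sqrt_nonneg _)).mp this.symm with h | h <;> simp [h]
  refine (gaussianReal_absolutelyContinuous 0 (by norm_num)) ?_
  exact measure_mono_null h1 ((Set.finite_singleton _ |>.insert _).measure_zero _)

lemma levelset_null {m : ℕ} (lam : Fin (m + 1) → ℝ) (hlam : ∀ j, lam j ≠ 0) (c : ℝ) :
    stdGaussPi (m + 1) {z | ∑ j, lam j * z j ^ 2 = c} = 0 := by
  set e := MeasurableEquiv.piFinSuccAbove (fun _ : Fin (m + 1) => ℝ) 0 with he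
  have mp := measurePreserving_piFinSuccAbove (fun _ : Fin (m + 1) => gaussianReal 0 1) 0
  set t : Set (ℝ × (Fin m → ℝ)) :=
    {p | lam 0 * p.1 ^ 2 + ∑ j : Fin m, lam ((0 : Fin (m+1)).succAbove j) * p.2 j ^ 2 = c} with ht
  have htm : MeasurableSet t := by
    have : Measurable fun p : ℝ × (Fin m → ℝ) =>
        lam 0 * p.1 ^ 2 + ∑ j : Fin m, lam ((0 : Fin (m+1)).succAbove j) * p.2 j ^ 2 := by fun_prop
    exact this (measurableSet_singleton c)
  have hset : {z : Fin (m+1) → ℝ | ∑ j, lam j * z j ^ 2 = c} = e ⁻¹' t := by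
    ext z
    simp only [Set.mem_preimage, Set.mem_setOf_eq, ht, he,
      MeasurableEquiv.piFinSuccAbove_apply]
    rw [Fin.sum_univ_succAbove (fun j => lam j * z j ^ 2) 0]
    rfl
  rw [hset]
  rw [show stdGaussPi (m+1) = Measure.pi fun _ => gaussianReal 0 1 from rfl,
    mp.measure_preimage htm.nullMeasurableSet]
  rw [Measure.prod_apply_symm htm]
  have : ∀ y : Fin m → ℝ, gaussianReal 0 1 ((fun x => (x, y)) ⁻¹' t) = 0 := by
    intro y
    have : ((fun x => (x, y)) ⁻¹' t) = {x : ℝ | lam 0 * x ^ 2 =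
        c - ∑ j : Fin m, lam ((0 : Fin (m+1)).succAbove j) * y j ^ 2} := by
      ext x; simp only [Set.mem_preimage, ht, Set.mem_setOf_eq]; constructor <;> intro h <;> linarith
    rw [this]
    exact gauss_sq_null _ _ (hlam 0)
  simp only [this, lintegral_zero]

section basics
variable {d : ℕ} (lam : Fin d → ℝ)

lemma measurable_qform : Measurable fun z : Fin d → ℝ => ∑ j, lam j * z j ^ 2 := by fun_prop

instance : IsProbabilityMeasure (mixLaw d lam) :=
  Measure.isProbabilityMeasure_map (measurable_qform lam).aemeasurable

lemma mixLaw_Iic (q : ℝ) :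
    mixLaw d lam (Iic q) = stdGaussPi d {z | ∑ j, lam j * z j ^ 2 ≤ q} := by
  rw [mixLaw, Measure.map_apply (measurable_qform lam) measurableSet_Iic]; rfl

lemma mixCDF_eq_cdf (q : ℝ) : mixCDF d lam q = cdf (mixLaw d lam) q := by
  rw [cdf_eq_real, measureReal_def, mixLaw_Iic, mixCDF]

lemma mixCDF_nonneg (q : ℝ) : 0 ≤ mixCDF d lam q := ENNReal.toReal_nonneg

lemma mixCDF_le_one (q : ℝ) : mixCDF d lam q ≤ 1 := by
  rw [mixCDF_eq_cdf]; exact cdf_le_one _ q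

lemma mixCDF_mono : Monotone (mixCDF d lam) := by
  intro a b hab; rw [mixCDF_eq_cdf, mixCDF_eq_cdf]; exact monotone_cdf _ hab

lemma mixCDF_tendsto_one : Tendsto (mixCDF d lam) atTop (nhds 1) := by
  have := tendsto_cdf_atTop (mixLaw d lam)
  refine this.congr fun q => (mixCDF_eq_cdf lam q).symm

lemma mixLaw_Iic_eq_ofReal (q : ℝ) :
    mixLaw d lam (Iic q) = ENNReal.ofReal (mixCDF d lam q) := by
  rw [mixCDF_eq_cdf, ofReal_cdf]

lemma mixCDF_continuous (hsing : ∀ c : ℝ, mixLaw d lam {c} = 0) :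
    Continuous (mixCDF d lam) := by
  have hc : Continuous (cdf (mixLaw d lam)) := by
    rw [continuous_iff_continuousAt]
    intro x
    rw [(monotone_cdf (mixLaw d lam)).continuousAt_iff_leftLim_eq_rightLim]
    have hr := StieltjesFunction.rightLim_eq (cdf (mixLaw d lam)) x
    have hs := StieltjesFunction.measure_singleton (cdf (mixLaw d lam)) x
    rw [measure_cdf, hsing x] at hs
    have h0 : cdf (mixLaw d lam) x - Function.leftLim (cdf (mixLaw d lam)) x ≤ 0 :=
      ENNReal.ofReal_eq_zero.mp hs.symm
    have hle : Function.leftLim (cdf (mixLaw d lam)) x ≤ cdf (mixLaw d lam) x :=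
      Monotone.leftLim_le (monotone_cdf _) le_rfl
    rw [hr]; linarith
  exact hc.congr fun q => (mixCDF_eq_cdf lam q).symm

lemma mixCDF_of_nonpos (hlam : ∀ j, 0 < lam j)
    (hnull : stdGaussPi d {z | ∑ j, lam j * z j ^ 2 = 0} = 0) {q : ℝ} (hq : q ≤ 0) :
    mixCDF d lam q = 0 := by
  rw [mixCDF]
  have hsub : {z : Fin d → ℝ | ∑ j, lam j * z j ^ 2 ≤ q} ⊆
      {z | ∑ j, lam j * z j ^ 2 = 0} := by
    intro z hz
    simp only [Set.mem_setOf_eq] at hz ⊢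
    have h0 : 0 ≤ ∑ j, lam j * z j ^ 2 :=
      Finset.sum_nonneg fun j _ => mul_nonneg (hlam j).le (sq_nonneg _)
    linarith
  rw [measure_mono_null hsub hnull]; simp

lemma mixCDF_of_neg {lam' : Fin d → ℝ} (hlam' : ∀ j, 0 < lam' j) {q : ℝ} (hq : q < 0) :
    mixCDF d lam' q = 0 := by
  rw [mixCDF]
  have : {z : Fin d → ℝ | ∑ j, lam' j * z j ^ 2 ≤ q} = ∅ := by
    ext z
    simp only [Set.mem_setOf_eq, Set.mem_empty_iff_false, iff_false, not_le]
    have h0 : 0 ≤ ∑ j, lam' j * z j ^ 2 :=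
      Finset.sum_nonneg fun j _ => mul_nonneg (hlam' j).le (sq_nonneg _)
    linarith
  rw [this, measure_empty]; simp

lemma measurable_mixCDF : Measurable fun p : (Fin d → ℝ) × ℝ => mixCDF d p.1 p.2 := by
  have hS : MeasurableSet
      {p : ((Fin d → ℝ) × ℝ) × (Fin d → ℝ) | ∑ j, p.1.1 j * p.2 j ^ 2 ≤ p.1.2} := by
    apply measurableSet_le <;> fun_prop
  exact (measurable_measure_prodMk_left (ν := stdGaussPi d) hS).ennreal_toReal

end basics

/-! ### The uniform law computation -/

variable {μ : Measure ℝ} [IsProbabilityMeasure μ] {F : ℝ → ℝ}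

lemma tail_measure
    (hIic : ∀ q, μ (Set.Iic q) = ENNReal.ofReal (F q)) (hsing : ∀ c : ℝ, μ {c} = 0)
    (hcont : Continuous F) (hmono : Monotone F) (h0 : ∀ q ≤ (0:ℝ), F q = 0)
    (h1 : Tendsto F atTop (nhds 1))
    {s : ℝ} (hs0 : 0 < s) (hs1 : s ≤ 1) :
    μ {x | s ≤ F x} = ENNReal.ofReal (1 - s) := by
  set A : Set ℝ := {x | s ≤ F x} with hA
  have hclosed : IsClosed A := isClosed_le continuous_const hcont
  rcases Set.eq_empty_or_nonempty A with hemp | hne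
  · have hsge : (1:ℝ) ≤ s := by
      refine le_of_tendsto h1 ?_
      filter_upwards with x
      by_contra h
      exact (Set.eq_empty_iff_forall_notMem.mp hemp x) (le_of_not_ge h)
    have : s = 1 := le_antisymm hs1 hsge
    rw [hemp, this]; simp
  · have hbdd : BddBelow A := by
      refine ⟨0, fun x hx => ?_⟩
      by_contra h
      push_neg at h
      have := h0 x h.le
      rw [hA, Set.mem_setOf_eq, this] at hx
      linarith
    set q := sInf A with hq
    have hqA : q ∈ A := hclosed.csInf_mem hne hbdd
    have hFq : F q = s := by
      refine le_antisymm ?_ hqA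
      have hev : ∀ x ∈ Set.Iio q, F x ≤ s := by
        intro x hx
        by_contra h
        push_neg at h
        exact absurd (csInf_le hbdd (le_of_lt h : s ≤ F x)) (not_le.mpr hx)
      have htend : Tendsto F (nhdsWithin q (Set.Iio q)) (nhds (F q)) :=
        (hcont.continuousAt).continuousWithinAt
      exact le_of_tendsto htend (eventually_nhdsWithin_of_forall hev)
    have hAIci : A = Set.Ici q := by
      ext x
      constructor
      · exact fun hx => csInf_le hbdd hx
      · intro hx
        exact le_trans (hFq ▸ hmono hx : s ≤ F x) le_rfl
    rw [hAIci, ← Set.compl_Iio, measure_compl measurableSet_Iio (measure_ne_top μ _)]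
    have hIio : μ (Set.Iio q) = ENNReal.ofReal s := by
      have : μ (Set.Iic q) = μ (Set.Iio q) + μ {q} := by
        rw [← measure_union (by simp) (measurableSet_singleton q)]
        congr 1
        simp
      rw [hsing, add_zero] at this
      rw [← this, hIic, hFq]
    rw [hIio, measure_univ]
    rw [← ENNReal.ofReal_one, ← ENNReal.ofReal_sub _ hs0.le]

lemma map_one_sub_eq_restrict
    (hIic : ∀ q, μ (Set.Iic q) = ENNReal.ofReal (F q)) (hsing : ∀ c : ℝ, μ {c} = 0)
    (hcont : Continuous F) (hmono : Monotone F) (h0 : ∀ q ≤ (0:ℝ), F q = 0)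
    (h1 : Tendsto F atTop (nhds 1)) (hnn : ∀ q, 0 ≤ F q) (hle1 : ∀ q, F q ≤ 1) :
    μ.map (fun x => 1 - F x) = (volume : Measure ℝ).restrict (Set.Icc 0 1) := by
  have hmeas : Measurable fun x => 1 - F x := (continuous_const.sub hcont).measurable
  have : IsProbabilityMeasure (μ.map (fun x => 1 - F x)) :=
    Measure.isProbabilityMeasure_map hmeas.aemeasurable
  have : IsFiniteMeasure ((volume : Measure ℝ).restrict (Set.Icc 0 1)) := by
    constructor
    rw [Measure.restrict_apply_univ, Real.volume_Icc]
    simp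
  refine Measure.ext_of_Iic _ _ fun t => ?_
  rw [Measure.map_apply hmeas measurableSet_Iic]
  have hRHS : (volume : Measure ℝ).restrict (Set.Icc 0 1) (Set.Iic t)
      = ENNReal.ofReal (min t 1) := by
    rw [Measure.restrict_apply measurableSet_Iic]
    have : Set.Iic t ∩ Set.Icc 0 1 = Set.Icc 0 (min t 1) := by
      ext x
      simp only [Set.mem_inter_iff, Set.mem_Iic, Set.mem_Icc, le_min_iff]
      tauto
    rw [this, Real.volume_Icc, sub_zero]
  rw [hRHS]
  have hpre : (fun x => 1 - F x) ⁻¹' Set.Iic t = {x | 1 - t ≤ F x} := by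
    ext x
    simp only [Set.mem_preimage, Set.mem_Iic, Set.mem_setOf_eq]
    constructor <;> intro <;> linarith
  rw [hpre]
  rcases lt_or_ge t 0 with ht | ht
  · have : {x | 1 - t ≤ F x} = (∅ : Set ℝ) := by
      ext x; simp only [Set.mem_setOf_eq, Set.mem_empty_iff_false, iff_false, not_le]
      have := hle1 x; linarith
    rw [this, measure_empty, min_eq_left (by linarith), ENNReal.ofReal_eq_zero.mpr ht.le]
  · rcases lt_or_ge t 1 with ht1 | ht1
    · have := tail_measure hIic hsing hcont hmono h0 h1
        (s := 1 - t) (by linarith) (by linarith)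
      rw [this, min_eq_left ht1.le]
      congr 1; ring
    · have : {x | 1 - t ≤ F x} = Set.univ := by
        ext x; simp only [Set.mem_setOf_eq, Set.mem_univ, iff_true]
        have := hnn x; linarith
      rw [this, measure_univ, min_eq_right ht1]
      simp

/-! ### Uniform closeness of perturbed CDFs -/

lemma gap_small {F : ℝ → ℝ} (hmono : Monotone F) (hcont : Continuous F)
    (h1 : Tendsto F atTop (nhds 1)) (hle1 : ∀ x, F x ≤ 1)
    {δ : ℝ} (hδ : 0 < δ) :
    ∃ θ : ℝ, 0 < θ ∧ θ ≤ 1/3 ∧ ∀ q : ℝ, 0 ≤ q → F (q / (1 - θ)) - F (q / (1 + θ)) ≤ δ := by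
  obtain ⟨M0, hM0⟩ : ∃ M0 : ℝ, 1 - δ < F M0 := by
    have : ∀ᶠ x in atTop, 1 - δ < F x := h1.eventually (eventually_gt_nhds (by linarith))
    exact this.exists
  set M := max M0 1 with hM
  have hM1 : (1:ℝ) ≤ M := le_max_right _ _
  have hMpos : (0:ℝ) < M := by linarith
  have hFM : 1 - δ < F M := lt_of_lt_of_le hM0 (hmono (le_max_left _ _))
  have hUC : UniformContinuousOn F (Set.Icc 0 (2 * M)) :=
    isCompact_Icc.uniformContinuousOn_of_continuous hcont.continuousOn
  obtain ⟨ρ, hρ, hρ'⟩ := Metric.uniformContinuousOn_iff.mp hUC δ hδ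
  refine ⟨min (1/3) (ρ / (6 * M)), lt_min (by norm_num) (by positivity), min_le_left _ _, ?_⟩
  set θ := min (1/3) (ρ / (6 * M)) with hθdef
  intro q hq
  have hθ0 : 0 < θ := lt_min (by norm_num) (by positivity)
  have hθ3 : θ ≤ 1/3 := min_le_left _ _
  have hθρ : θ ≤ ρ / (6 * M) := min_le_right _ _
  have h1θ : (0:ℝ) < 1 - θ := by linarith
  have h1θ' : (0:ℝ) < 1 + θ := by linarith
  rcases le_or_gt q ((1 + θ) * M) with hqM | hqM
  · set x := q / (1 - θ)
    set y := q / (1 + θ)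
    have hy0 : 0 ≤ y := div_nonneg hq h1θ'.le
    have hx0 : 0 ≤ x := div_nonneg hq h1θ.le
    have hx2M : x ≤ 2 * M := by
      rw [div_le_iff₀ h1θ]
      nlinarith
    have hyx : y ≤ x := by
      apply div_le_div_of_nonneg_left hq h1θ
      linarith
    have hy2M : y ≤ 2 * M := le_trans hyx hx2M
    have hdist : dist x y < ρ := by
      rw [Real.dist_eq, abs_of_nonneg (by linarith)]
      have hid : (x - y) * ((1 - θ) * (1 + θ)) = q * (2 * θ) := by
        show (q / (1 - θ) - q / (1 + θ)) * ((1 - θ) * (1 + θ)) = q * (2 * θ)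
        field_simp
        ring
      have h6 : θ * (6 * M) ≤ ρ := (le_div_iff₀ (by positivity)).mp hθρ
      nlinarith [mul_pos hθ0 hMpos, sq_nonneg θ, mul_nonneg hq hθ0.le,
        mul_le_mul_of_nonneg_right hqM (by linarith : (0:ℝ) ≤ 2 * θ),
        mul_nonneg (mul_nonneg hq hθ0.le) hθ0.le]
    have := hρ' x ⟨hx0, hx2M⟩ y ⟨hy0, hy2M⟩ hdist
    rw [Real.dist_eq] at this
    have := abs_lt.mp this
    linarith [this.2]
  · have hyM : M < q / (1 + θ) := by
      rw [lt_div_iff₀ h1θ']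
      linarith
    have := hmono hyM.le
    have := hle1 (q / (1 - θ))
    linarith [hFM]

lemma mixCDF_mono_set {d : ℕ} {lam lam' : Fin d → ℝ} {q q' : ℝ}
    (h : {z : Fin d → ℝ | ∑ j, lam j * z j ^ 2 ≤ q} ⊆ {z | ∑ j, lam' j * z j ^ 2 ≤ q'}) :
    mixCDF d lam q ≤ mixCDF d lam' q' :=
  ENNReal.toReal_mono (measure_ne_top _ _) (measure_mono h)

lemma mixCDF_sandwich {d : ℕ} {lam lam' : Fin d → ℝ} {θ : ℝ} (hθ0 : 0 < θ) (hθ1 : θ < 1)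
    (hlow : ∀ j, (1 - θ) * lam j ≤ lam' j) (hup : ∀ j, lam' j ≤ (1 + θ) * lam j)
    (q : ℝ) :
    mixCDF d lam (q / (1 + θ)) ≤ mixCDF d lam' q ∧
      mixCDF d lam' q ≤ mixCDF d lam (q / (1 - θ)) := by
  constructor
  · apply mixCDF_mono_set
    intro z hz
    simp only [Set.mem_setOf_eq] at hz ⊢
    have hsum : ∑ j, lam' j * z j ^ 2 ≤ (1 + θ) * ∑ j, lam j * z j ^ 2 := by
      rw [Finset.mul_sum]
      refine Finset.sum_le_sum fun j _ => ?_
      nlinarith [sq_nonneg (z j), mul_le_mul_of_nonneg_right (hup j) (sq_nonneg (z j))]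
    have := (le_div_iff₀ (by linarith : (0:ℝ) < 1 + θ)).mp hz
    linarith
  · apply mixCDF_mono_set
    intro z hz
    simp only [Set.mem_setOf_eq] at hz ⊢
    have hsum : (1 - θ) * ∑ j, lam j * z j ^ 2 ≤ ∑ j, lam' j * z j ^ 2 := by
      rw [Finset.mul_sum]
      refine Finset.sum_le_sum fun j _ => ?_
      nlinarith [sq_nonneg (z j), mul_le_mul_of_nonneg_right (hlow j) (sq_nonneg (z j))]
    rw [le_div_iff₀ (by linarith : (0:ℝ) < 1 - θ)]
    nlinarith

lemma mixCDF_approx {d : ℕ} {lam lam' : Fin d → ℝ} (hlam : ∀ j, 0 < lam j)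
    {θ δ : ℝ} (hθ0 : 0 < θ) (hθ1 : θ < 1)
    (hzero : ∀ q ≤ (0:ℝ), mixCDF d lam q = 0)
    (hgap : ∀ q : ℝ, 0 ≤ q → mixCDF d lam (q / (1 - θ)) - mixCDF d lam (q / (1 + θ)) ≤ δ)
    (hlow : ∀ j, (1 - θ) * lam j ≤ lam' j) (hup : ∀ j, lam' j ≤ (1 + θ) * lam j)
    (q : ℝ) : |mixCDF d lam' q - mixCDF d lam q| ≤ δ := by
  have hδ0 : 0 ≤ δ := by
    have := hgap 0 le_rfl
    simp only [zero_div, sub_self] at this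
    linarith
  rcases lt_or_ge q 0 with hq | hq
  · have h1 : mixCDF d lam' q = 0 := by
      refine mixCDF_of_neg (fun j => ?_) hq
      have := hlow j
      nlinarith [hlam j]
    rw [h1, hzero q hq.le]
    simpa using hδ0
  · obtain ⟨hs1, hs2⟩ := mixCDF_sandwich hθ0 hθ1 hlow hup (lam := lam) q
    have hq1 : q / (1 + θ) ≤ q := by
      apply div_le_self hq
      linarith
    have hq2 : q ≤ q / (1 - θ) := by
      rw [le_div_iff₀ (by linarith : (0:ℝ) < 1 - θ)]
      nlinarith
    have hm1 := mixCDF_mono lam hq1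
    have hm2 := mixCDF_mono lam hq2
    have := hgap q hq
    rw [abs_le]
    constructor <;> linarith

end Stmt2Aux

open Stmt2Aux

theorem stmt2 {Ω : Type*} [MeasurableSpace Ω] (P : Measure Ω) [IsProbabilityMeasure P]
    (d : ℕ) (hd : 0 < d) (lam : Fin d → ℝ) (hlam : ∀ j, 0 < lam j)
    (T : ℕ → Ω → ℝ) (hT : ∀ n, Measurable (T n))
    (hTdist : ∀ g : BoundedContinuousFunction ℝ ℝ,
      Tendsto (fun n => ∫ ω, g (T n ω) ∂P) atTop (nhds (∫ x, g x ∂(mixLaw d lam))))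
    (lamHat : ℕ → Ω → Fin d → ℝ) (hlamHat : ∀ n, Measurable (lamHat n))
    (hprob : ∀ ε > 0, Tendsto (fun n => P {ω | ε < ‖lamHat n ω - lam‖}) atTop (nhds 0)) :
    ∀ g : BoundedContinuousFunction ℝ ℝ,
      Tendsto (fun n => ∫ ω, g (1 - mixCDF d (lamHat n ω) (T n ω)) ∂P) atTop
        (nhds (∫ x in Set.Icc (0 : ℝ) 1, g x)) := by
  obtain ⟨m, rfl⟩ : ∃ m, d = m + 1 := ⟨d - 1, (Nat.succ_pred_eq_of_pos hd).symm⟩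
  intro g
  -- basic properties of F := mixCDF (m+1) lam
  have hlamne : ∀ j, lam j ≠ 0 := fun j => (hlam j).ne'
  have hsing : ∀ c : ℝ, mixLaw (m+1) lam {c} = 0 := by
    intro c
    rw [mixLaw, Measure.map_apply (measurable_qform lam) (measurableSet_singleton c)]
    exact levelset_null lam hlamne c
  have hcont : Continuous (mixCDF (m+1) lam) := mixCDF_continuous lam hsing
  have hmono : Monotone (mixCDF (m+1) lam) := mixCDF_mono lam
  have h1 : Tendsto (mixCDF (m+1) lam) atTop (nhds 1) := mixCDF_tendsto_one lam
  have hzero : ∀ q ≤ (0:ℝ), mixCDF (m+1) lam q = 0 := fun q hq =>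
    mixCDF_of_nonpos lam hlam (levelset_null lam hlamne 0) hq
  have hIic := mixLaw_Iic_eq_ofReal lam
  have hnn := mixCDF_nonneg lam
  have hle1 := mixCDF_le_one lam
  -- the pushforward of the law under 1 - F is uniform on [0,1]
  have hmap : (mixLaw (m+1) lam).map (fun x => 1 - mixCDF (m+1) lam x)
      = (volume : Measure ℝ).restrict (Set.Icc 0 1) :=
    map_one_sub_eq_restrict hIic hsing hcont hmono hzero h1 hnn hle1
  -- Step A : convergence of the unperturbed sequence
  set F := mixCDF (m+1) lam with hF
  let Fc : C(ℝ, ℝ) := ⟨fun x => 1 - F x, by continuity⟩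
  let h : BoundedContinuousFunction ℝ ℝ := g.compContinuous Fc
  have hlim : ∫ x, h x ∂(mixLaw (m+1) lam) = ∫ x in Set.Icc (0:ℝ) 1, g x := by
    have h1' : ∫ x, h x ∂(mixLaw (m+1) lam) = ∫ x, g (1 - F x) ∂(mixLaw (m+1) lam) := rfl
    rw [h1']
    rw [← integral_map (φ := fun x => 1 - F x) ((continuous_const.sub hcont).measurable.aemeasurable)
      g.continuous.aestronglyMeasurable, hmap]
  have hb : Tendsto (fun n => ∫ ω, g (1 - F (T n ω)) ∂P) atTop
      (nhds (∫ x in Set.Icc (0:ℝ) 1, g x)) := by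
    have := hTdist h
    rw [hlim] at this
    exact this
  -- Step B : the perturbation goes to zero
  have hdiff : Tendsto (fun n => (∫ ω, g (1 - mixCDF (m+1) (lamHat n ω) (T n ω)) ∂P)
      - ∫ ω, g (1 - F (T n ω)) ∂P) atTop (nhds 0) := by
    rw [Metric.tendsto_atTop]
    intro ε hε
    set C := ‖g‖ with hC
    have hC0 : 0 ≤ C := norm_nonneg g
    -- uniform continuity of g on [0,1]
    obtain ⟨δ, hδ, hδ'⟩ := Metric.uniformContinuousOn_iff.mp
      (isCompact_Icc.uniformContinuousOn_of_continuous (s := Set.Icc (0:ℝ) 1)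
        g.continuous.continuousOn) (ε/4) (by linarith)
    -- gap bound
    obtain ⟨θ, hθ0, hθ3, hgap⟩ := gap_small hmono hcont h1 hle1 (δ := δ/2) (by linarith)
    have hθ1 : θ < 1 := by linarith
    -- choose η
    have hne : (Finset.univ : Finset (Fin (m+1))).Nonempty := Finset.univ_nonempty
    set lmin := Finset.univ.inf' hne lam with hlmin
    have hlmin0 : 0 < lmin := by
      rw [hlmin, Finset.lt_inf'_iff]
      exact fun j _ => hlam j
    have hlmin_le : ∀ j, lmin ≤ lam j := fun j => Finset.inf'_le _ (Finset.mem_univ j)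
    set η := θ * lmin with hη
    have hη0 : 0 < η := mul_pos hθ0 hlmin0
    -- probability of the bad event tends to zero
    have hPreal : Tendsto (fun n => (P {ω | η < ‖lamHat n ω - lam‖}).toReal) atTop
        (nhds 0) := by
      have := (ENNReal.tendsto_toReal (a := 0) (by simp)).comp (hprob η hη0)
      simpa [Function.comp_def] using this
    have hev : ∀ᶠ n in atTop,
        (P {ω | η < ‖lamHat n ω - lam‖}).toReal < ε / (8 * C + 4) :=
      hPreal.eventually (gt_mem_nhds (by positivity))
    obtain ⟨N, hN⟩ := eventually_atTop.mp hev
    refine ⟨N, fun n hn => ?_⟩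
    set bad := {ω | η < ‖lamHat n ω - lam‖} with hbad
    have hbadm : MeasurableSet bad := by
      have : Measurable fun ω => ‖lamHat n ω - lam‖ := ((hlamHat n).sub_const lam).norm
      exact measurableSet_lt measurable_const this
    set f1 := fun ω => g (1 - mixCDF (m+1) (lamHat n ω) (T n ω)) with hf1
    set f2 := fun ω => g (1 - F (T n ω)) with hf2
    have hmc : Measurable fun ω => mixCDF (m+1) (lamHat n ω) (T n ω) := by
      have h' := Measurable.comp (measurable_mixCDF (d := m+1))
        ((hlamHat n).prodMk (hT n))
      exact h'
    have hm1 : Measurable f1 := by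
      apply g.continuous.measurable.comp
      exact measurable_const.sub hmc
    have hm2 : Measurable f2 := by
      apply g.continuous.measurable.comp
      exact measurable_const.sub (hcont.measurable.comp (hT n))
    have hb1 : ∀ ω, |f1 ω| ≤ C := fun ω => g.norm_coe_le_norm _
    have hb2 : ∀ ω, |f2 ω| ≤ C := fun ω => g.norm_coe_le_norm _
    have hint1 : Integrable f1 P :=
      ⟨hm1.aestronglyMeasurable, HasFiniteIntegral.of_bounded (C := C)
        (Filter.Eventually.of_forall hb1)⟩
    have hint2 : Integrable f2 P :=
      ⟨hm2.aestronglyMeasurable, HasFiniteIntegral.of_bounded (C := C)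
        (Filter.Eventually.of_forall hb2)⟩
    -- pointwise bound
    have hpt : ∀ ω, |f1 ω - f2 ω| ≤ ε/4 + bad.indicator (fun _ => 2*C) ω := by
      intro ω
      by_cases hω : ω ∈ bad
      · rw [Set.indicator_of_mem hω]
        have := abs_sub (f1 ω) (f2 ω)
        calc |f1 ω - f2 ω| ≤ |f1 ω| + |f2 ω| := abs_sub _ _
          _ ≤ C + C := add_le_add (hb1 ω) (hb2 ω)
          _ ≤ ε/4 + 2*C := by linarith
      · rw [Set.indicator_of_notMem hω, add_zero]
        rw [hbad, Set.mem_setOf_eq, not_lt] at hω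
        -- componentwise bounds on lamHat
        have hcomp : ∀ j, (1 - θ) * lam j ≤ lamHat n ω j ∧ lamHat n ω j ≤ (1 + θ) * lam j := by
          intro j
          have h1j : |lamHat n ω j - lam j| ≤ η := by
            have := norm_le_pi_norm (lamHat n ω - lam) j
            rw [Pi.sub_apply] at this
            exact le_trans this hω
          have h2j : η ≤ θ * lam j :=
            mul_le_mul_of_nonneg_left (hlmin_le j) hθ0.le
          have := abs_le.mp h1j
          constructor <;> nlinarith
        have happrox : |mixCDF (m+1) (lamHat n ω) (T n ω) - F (T n ω)| ≤ δ/2 :=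
          mixCDF_approx hlam hθ0 hθ1 hzero hgap (fun j => (hcomp j).1)
            (fun j => (hcomp j).2) (T n ω)
        have hx : (1 - mixCDF (m+1) (lamHat n ω) (T n ω)) ∈ Set.Icc (0:ℝ) 1 := by
          constructor
          · have := mixCDF_le_one (lamHat n ω) (T n ω); linarith
          · have := mixCDF_nonneg (lamHat n ω) (T n ω); linarith
        have hy : (1 - F (T n ω)) ∈ Set.Icc (0:ℝ) 1 := by
          constructor
          · have := hle1 (T n ω); linarith
          · have := hnn (T n ω); linarith
        have hd' : dist (1 - mixCDF (m+1) (lamHat n ω) (T n ω)) (1 - F (T n ω)) < δ := by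
          rw [Real.dist_eq]
          have : |(1 - mixCDF (m+1) (lamHat n ω) (T n ω)) - (1 - F (T n ω))|
              = |mixCDF (m+1) (lamHat n ω) (T n ω) - F (T n ω)| := by
            rw [← abs_neg]; congr 1; ring
          rw [this]
          linarith
        have := hδ' _ hx _ hy hd'
        rw [Real.dist_eq] at this
        exact le_trans this.le (by linarith)
    -- integrate
    have hintd : Integrable (fun ω => f1 ω - f2 ω) P := hint1.sub hint2
    have hintbound : Integrable (fun ω => ε/4 + bad.indicator (fun _ => 2*C) ω) P := by
      refine (integrable_const _).add ?_
      exact (integrable_const (2*C)).indicator hbadm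
    have hI : |∫ ω, (f1 ω - f2 ω) ∂P| ≤ ε/4 + 2*C * (P bad).toReal := by
      calc |∫ ω, (f1 ω - f2 ω) ∂P| ≤ ∫ ω, |f1 ω - f2 ω| ∂P := by
            simpa [Real.norm_eq_abs] using norm_integral_le_integral_norm (fun ω => f1 ω - f2 ω) (μ := P)
        _ ≤ ∫ ω, (ε/4 + bad.indicator (fun _ => 2*C) ω) ∂P := by
            refine integral_mono (hintd.abs) hintbound hpt
        _ = ε/4 + 2*C * (P bad).toReal := by
            rw [integral_add (integrable_const _) ((integrable_const (2*C)).indicator hbadm)]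
            rw [integral_const, integral_indicator_const _ hbadm]
            simp [measure_univ, mul_comm, measureReal_def]
    have hsmall : 2*C * (P bad).toReal < ε/2 := by
      have hp0 : 0 ≤ (P bad).toReal := ENNReal.toReal_nonneg
      have h2 := hN n hn
      rw [← hbad] at h2
      have h3 : (P bad).toReal * (8 * C + 4) < ε :=
        (lt_div_iff₀ (by positivity : (0:ℝ) < 8 * C + 4)).mp h2
      nlinarith [mul_nonneg hC0 hp0]
    rw [Real.dist_eq, sub_zero, ← integral_sub hint1 hint2]
    calc |∫ ω, (f1 ω - f2 ω) ∂P| ≤ ε/4 + 2*C * (P bad).toReal := hI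
      _ < ε/4 + ε/2 := by linarith
      _ < ε := by linarith
  -- combine
  have := hb.add hdiff
  rw [add_zero] at this
  refine this.congr fun n => ?_
  ring
end

section
/- Let d be a positive integer, let c > 0, and suppose λ = (c, c, …, c) ∈ ℝ^d. Let (T_n) be an arbitrary sequence of real-valued random variables, and let (λ̂_n) be a sequence of random vectors in ℝ^d converging in probability to λ. Define the Satorra-Bentler weight vector λ̂_n^{SB} whose every coordinate equals the mean (1/d) Σ_{j=1}^d λ̂_{n,j}. Then λ̂_n^{SB} converges in probability to λ, and consequently the Satorra-Bentler p-value p̂_{n,SB} = 1 − H(T_n; λ̂_n^{SB}) satisfies p̂_{n,SB} − p_n → 0 in probability, where p_n = 1 − H(T_n; λ). -/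
open MeasureTheory ProbabilityTheory Filter

lemma measurable_sumsq (d : ℕ) : Measurable (fun z : Fin d → ℝ => ∑ j, z j ^ 2) := by
  measurability

instance stdGaussPi_prob (d : ℕ) : IsProbabilityMeasure (stdGaussPi d) := by
  unfold stdGaussPi; infer_instance

instance gauss_noAtoms : NullSingletonClass (gaussianReal 0 1) := by
  constructor
  intro x
  exact gaussianReal_absolutelyContinuous 0 one_ne_zero (measure_singleton x)

lemma sumsq_level_zero {d : ℕ} (hd : 0 < d) (t : ℝ) :
    stdGaussPi d {z | ∑ j, z j ^ 2 = t} = 0 := by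
  obtain ⟨m, rfl⟩ : ∃ m, d = m + 1 := ⟨d - 1, (Nat.succ_pred_eq_of_pos hd).symm⟩
  set e := MeasurableEquiv.piFinSuccAbove (fun _ : Fin (m+1) => ℝ) 0
  have mp := measurePreserving_piFinSuccAbove (fun _ : Fin (m+1) => gaussianReal 0 1) 0
  have hA : MeasurableSet {z : Fin (m+1) → ℝ | ∑ j, z j ^ 2 = t} :=
    (measurable_sumsq _) (measurableSet_singleton t)
  have h1 : stdGaussPi (m+1) {z | ∑ j, z j ^ 2 = t}
      = ((gaussianReal 0 1).prod (Measure.pi fun _ : Fin m => gaussianReal 0 1))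
        (e.symm ⁻¹' {z | ∑ j, z j ^ 2 = t}) :=
    ((mp.symm e).measure_preimage hA.nullMeasurableSet).symm
  rw [h1]
  have h2 : (e.symm ⁻¹' {z | ∑ j, z j ^ 2 = t})
      = {p : ℝ × (Fin m → ℝ) | p.1 ^ 2 + ∑ j, p.2 j ^ 2 = t} := by
    ext ⟨x, y⟩
    simp only [Set.mem_preimage, Set.mem_setOf_eq]
    rw [Fin.sum_univ_succAbove (fun j => (e.symm (x, y)) j ^ 2) 0]
    simp [e, MeasurableEquiv.piFinSuccAbove]
  rw [h2]
  rw [Measure.prod_apply_symm]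
  · have hz : ∀ y : Fin m → ℝ,
        (gaussianReal 0 1) ((fun x => (x, y)) ⁻¹' {p : ℝ × (Fin m → ℝ) | p.1 ^ 2 + ∑ j, p.2 j ^ 2 = t}) = 0 := by
      intro y
      refine measure_mono_null ?_
        (((Set.finite_singleton
          (-Real.sqrt (t - ∑ j, y j ^ 2))).insert (Real.sqrt (t - ∑ j, y j ^ 2))).countable.measure_zero (gaussianReal 0 1))
      intro x hx
      simp only [Set.mem_preimage, Set.mem_setOf_eq] at hx
      have hx2 : x ^ 2 = t - ∑ j, y j ^ 2 := by linarith
      have habs : Real.sqrt (t - ∑ j, y j ^ 2) = |x| := by rw [← hx2, Real.sqrt_sq_eq_abs]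
      rcases abs_cases x with ⟨h, _⟩ | ⟨h, _⟩
      · left; rw [habs, h]
      · right
        simp only [Set.mem_singleton_iff]
        rw [habs, h]; ring
    simp only [hz]
    simp
  · exact (by fun_prop : Measurable fun p : ℝ × (Fin m → ℝ) => p.1 ^ 2 + ∑ j, p.2 j ^ 2)
      (measurableSet_singleton t)

lemma cdf_cont {ν : Measure ℝ} [IsProbabilityMeasure ν] (h : ∀ t, ν {t} = 0) :
    Continuous (cdf ν) := by
  rw [continuous_iff_continuousAt]
  intro x
  rw [(monotone_cdf ν).continuousAt_iff_leftLim_eq_rightLim, (cdf ν).rightLim_eq]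
  have h1 : (cdf ν).measure {x} = 0 := by rw [measure_cdf]; exact h x
  rw [(cdf ν).measure_singleton] at h1
  have h2 : Function.leftLim (cdf ν) x ≤ cdf ν x := (monotone_cdf ν).leftLim_le le_rfl
  have h3 : cdf ν x - Function.leftLim (cdf ν) x ≤ 0 := by
    by_contra hcon
    push_neg at hcon
    rw [ENNReal.ofReal_eq_zero] at h1
    linarith
  linarith

noncomputable def nuM (d : ℕ) : Measure ℝ :=
  Measure.map (fun z : Fin d → ℝ => ∑ j, z j ^ 2) (stdGaussPi d)

instance nuM_prob (d : ℕ) : IsProbabilityMeasure (nuM d) :=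
  Measure.isProbabilityMeasure_map (measurable_sumsq d).aemeasurable

lemma nuM_singleton {d : ℕ} (hd : 0 < d) (t : ℝ) : nuM d {t} = 0 := by
  rw [nuM, Measure.map_apply (measurable_sumsq d) (measurableSet_singleton t)]
  exact sumsq_level_zero hd t

lemma mixCDF_const (d : ℕ) {a : ℝ} (ha : 0 < a) (q : ℝ) :
    mixCDF d (fun _ => a) q = cdf (nuM d) (q / a) := by
  have hset : {z : Fin d → ℝ | ∑ j, a * z j ^ 2 ≤ q}
      = (fun z : Fin d → ℝ => ∑ j, z j ^ 2) ⁻¹' Set.Iic (q/a) := by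
    ext z
    simp only [Set.mem_setOf_eq, Set.mem_preimage, Set.mem_Iic]
    rw [le_div_iff₀ ha]
    have hsum : (∑ j, z j ^ 2) * a = ∑ j, a * z j ^ 2 := by
      rw [Finset.sum_mul]; exact Finset.sum_congr rfl fun j _ => mul_comm _ _
    rw [hsum]
  rw [cdf_eq_real, Measure.real, nuM, Measure.map_apply (measurable_sumsq d) measurableSet_Iic]
  show (stdGaussPi d {z | ∑ j, a * z j ^ 2 ≤ q}).toReal = _
  rw [hset]

lemma cdfF_nonpos {d : ℕ} (hd : 0 < d) {t : ℝ} (ht : t ≤ 0) : cdf (nuM d) t = 0 := by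
  rw [cdf_eq_real, Measure.real, nuM, Measure.map_apply (measurable_sumsq d) measurableSet_Iic]
  have : ((fun z : Fin d → ℝ => ∑ j, z j ^ 2) ⁻¹' Set.Iic t) ⊆ {z | ∑ j, z j ^ 2 = 0} := by
    intro z hz
    simp only [Set.mem_preimage, Set.mem_Iic] at hz
    have h0 : (0:ℝ) ≤ ∑ j, z j ^ 2 := Finset.sum_nonneg fun j _ => sq_nonneg _
    exact le_antisymm (hz.trans ht) h0
  rw [measure_mono_null this (sumsq_level_zero hd 0)]
  simp

set_option maxHeartbeats 1000000 in
lemma key {d : ℕ} (hd : 0 < d) {c : ℝ} (hc : 0 < c) {ε : ℝ} (hε : 0 < ε) :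
    ∃ δ > 0, ∀ a q : ℝ, |a - c| ≤ δ →
      |mixCDF d (fun _ => a) q - mixCDF d (fun _ => c) q| ≤ ε := by
  have hFmono : Monotone (cdf (nuM d)) := monotone_cdf _
  have hFcont : Continuous (cdf (nuM d)) := cdf_cont (nuM_singleton hd)
  have hFle1 : ∀ x, cdf (nuM d) x ≤ 1 := cdf_le_one _
  have hM : ∃ M ≥ 0, ∀ x ≥ M, 1 - ε/2 ≤ cdf (nuM d) x := by
    have h1 : ∀ᶠ x in atTop, 1 - ε/2 ≤ cdf (nuM d) x :=
      (tendsto_cdf_atTop (nuM d)).eventually (eventually_ge_nhds (by linarith))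
    obtain ⟨M, hM⟩ := (h1.and (eventually_ge_atTop (0:ℝ))).exists
    exact ⟨M, hM.2, fun x hx => hFmono hx |>.trans' hM.1⟩
  obtain ⟨M, hM0, hM⟩ := hM
  have hUC : ∃ δ' > 0, ∀ x ∈ Set.Icc (0:ℝ) (4*M), ∀ y ∈ Set.Icc (0:ℝ) (4*M),
      |x - y| < δ' → |cdf (nuM d) x - cdf (nuM d) y| < ε/2 := by
    have := (isCompact_Icc (a := (0:ℝ)) (b := 4*M)).uniformContinuousOn_of_continuous
      hFcont.continuousOn
    rw [Metric.uniformContinuousOn_iff] at this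
    obtain ⟨δ', hδ'pos, hδ'⟩ := this (ε/2) (by linarith)
    exact ⟨δ', hδ'pos, fun x hx y hy hxy => by
      simpa [Real.dist_eq] using hδ' x hx y hy (by simpa [Real.dist_eq] using hxy)⟩
  obtain ⟨δ', hδ'pos, hδ'⟩ := hUC
  obtain ⟨δ, hδdef⟩ : ∃ δ : ℝ, δ = min (c/2) (c * δ' / (8*M + 1)) := ⟨_, rfl⟩
  have hδpos : 0 < δ := hδdef ▸ lt_min (by linarith) (by positivity)
  have hδc2 : δ ≤ c/2 := hδdef ▸ min_le_left _ _
  have hδ2 : δ ≤ c * δ' / (8*M + 1) := hδdef ▸ min_le_right _ _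
  refine ⟨δ, hδpos, ?_⟩
  intro a q hac
  have ha_lb : c - δ ≤ a := by have := (abs_le.1 hac).1; linarith
  have ha_ub : a ≤ c + δ := by have := (abs_le.1 hac).2; linarith
  have hcδ : 0 < c - δ := by linarith
  have ha : 0 < a := by linarith
  rw [mixCDF_const d ha q, mixCDF_const d hc q]
  rcases le_or_gt q 0 with hq | hq
  · rw [cdfF_nonpos hd (div_nonpos_iff.mpr (Or.inr ⟨hq, ha.le⟩)),
      cdfF_nonpos hd (div_nonpos_iff.mpr (Or.inr ⟨hq, hc.le⟩))]
    simpa using hε.le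
  · obtain ⟨x, hxdef⟩ : ∃ x : ℝ, x = q / (c + δ) := ⟨_, rfl⟩
    obtain ⟨y, hydef⟩ : ∃ y : ℝ, y = q / (c - δ) := ⟨_, rfl⟩
    have hxpos : 0 < x := hxdef ▸ div_pos hq (by linarith)
    have hxy : x ≤ y := by
      rw [hxdef, hydef]; exact div_le_div_of_nonneg_left hq.le hcδ (by linarith)
    have hxa : x ≤ q / a := hxdef ▸ div_le_div_of_nonneg_left hq.le ha ha_ub
    have hay : q / a ≤ y := hydef ▸ div_le_div_of_nonneg_left hq.le hcδ ha_lb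
    have hxc : x ≤ q / c := hxdef ▸ div_le_div_of_nonneg_left hq.le hc (by linarith)
    have hcy : q / c ≤ y := hydef ▸ div_le_div_of_nonneg_left hq.le hcδ (by linarith)
    have bound : cdf (nuM d) y - cdf (nuM d) x ≤ ε →
        |cdf (nuM d) (q/a) - cdf (nuM d) (q/c)| ≤ ε := by
      intro h
      have h1 := hFmono hxa
      have h2 := hFmono hay
      have h3 := hFmono hxc
      have h4 := hFmono hcy
      rw [abs_le]; constructor <;> linarith
    apply bound
    rcases le_or_gt M x with hMx | hMx
    · have := hM x hMx
      have := hFle1 y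
      linarith
    · have hqM : q < M * (c + δ) := by
        rw [hxdef, div_lt_iff₀ (by linarith)] at hMx
        linarith
      have hq2cM : q ≤ 2 * c * M := by nlinarith
      have hyB : y ≤ 4 * M := by
        rw [hydef, div_le_iff₀ hcδ]; nlinarith
      have hxB : x ≤ 4 * M := hxy.trans hyB
      have e1 : y - x = q * (2*δ) / ((c-δ)*(c+δ)) := by
        rw [hydef, hxdef]; field_simp; ring
      have e2 : q * (2*δ) ≤ 2*c*M * (2*δ) := by nlinarith
      have e3 : (c/2)*c ≤ (c-δ)*(c+δ) := by nlinarith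
      have e4 : y - x ≤ 2*c*M*(2*δ) / ((c/2)*c) := by
        rw [e1]
        exact div_le_div₀ (by positivity) e2 (by positivity) e3
      have e5 : 2*c*M*(2*δ) / ((c/2)*c) = 8*M*δ/c := by
        field_simp; ring
      have hsmall : |y - x| < δ' := by
        rw [abs_of_nonneg (by linarith)]
        have h8 : 8*M*δ/c ≤ 8*M*(c * δ' / (8*M+1))/c := by
          gcongr
        have h9 : 8*M*(c * δ' / (8*M+1))/c = 8*M*δ'/(8*M+1) := by
          field_simp
        have h10 : 8*M*δ'/(8*M+1) < δ' := by
          rw [div_lt_iff₀ (by positivity)]; nlinarith [hδ'pos, hM0]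
        have e6 : y - x ≤ 8*M*δ/c := by rw [← e5]; exact e4
        linarith
      have hfin := hδ' y ⟨by rw [hydef]; positivity, hyB⟩ x ⟨hxpos.le, hxB⟩ hsmall
      have h2 : cdf (nuM d) y - cdf (nuM d) x ≤ |cdf (nuM d) y - cdf (nuM d) x| :=
        le_abs_self _
      linarith

theorem stmt12 {Ω : Type*} [MeasurableSpace Ω] (P : Measure Ω) [IsProbabilityMeasure P]
    (d : ℕ) (hd : 0 < d) (c : ℝ) (hc : 0 < c)
    (lam : Fin d → ℝ) (hlam : lam = fun _ => c)
    (T : ℕ → Ω → ℝ) (hT : ∀ n, Measurable (T n))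
    (lamHat : ℕ → Ω → Fin d → ℝ) (hlamHat : ∀ n, Measurable (lamHat n))
    (hprob : ∀ ε > 0, Tendsto (fun n => P {ω | ε < ‖lamHat n ω - lam‖}) atTop (nhds 0))
    -- the Satorra-Bentler weight vector: every coordinate equals the mean of `lamHat n ω`
    (lamSB : ℕ → Ω → Fin d → ℝ)
    (hSB : ∀ n ω, lamSB n ω = fun _ => (∑ j, lamHat n ω j) / d) :
    (∀ ε > 0, Tendsto (fun n => P {ω | ε < ‖lamSB n ω - lam‖}) atTop (nhds 0)) ∧
    (∀ ε > 0,
      Tendsto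
        (fun n => P {ω |
          ε < |(1 - mixCDF d (lamSB n ω) (T n ω)) - (1 - mixCDF d lam (T n ω))|})
        atTop (nhds 0)) := by
  have hne : Nonempty (Fin d) := ⟨⟨0, hd⟩⟩
  have hd' : (0:ℝ) < d := by exact_mod_cast hd
  -- key norm bound : ‖lamSB n ω - lam‖ ≤ ‖lamHat n ω - lam‖
  have hnorm : ∀ n ω, ‖lamSB n ω - lam‖ ≤ ‖lamHat n ω - lam‖ := by
    intro n ω
    have hcoord : ∀ j : Fin d, |lamHat n ω j - c| ≤ ‖lamHat n ω - lam‖ := by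
      intro j
      have := norm_le_pi_norm (lamHat n ω - lam) j
      simpa [hlam, Real.norm_eq_abs] using this
    have heq : lamSB n ω - lam = fun _ : Fin d => (∑ j, lamHat n ω j) / d - c := by
      rw [hSB, hlam]; rfl
    rw [heq, pi_norm_const, Real.norm_eq_abs]
    have hm : (∑ j, lamHat n ω j) / d - c = (∑ j, (lamHat n ω j - c)) / d := by
      rw [Finset.sum_sub_distrib, Finset.sum_const, Finset.card_univ, Fintype.card_fin]
      field_simp
      rw [nsmul_eq_mul]
    rw [hm, abs_div, abs_of_pos hd']
    rw [div_le_iff₀ hd']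
    calc |∑ j, (lamHat n ω j - c)| ≤ ∑ j, |lamHat n ω j - c| :=
          Finset.abs_sum_le_sum_abs _ _
      _ ≤ ∑ _j : Fin d, ‖lamHat n ω - lam‖ := Finset.sum_le_sum fun j _ => hcoord j
      _ = ‖lamHat n ω - lam‖ * d := by
          rw [Finset.sum_const, Finset.card_univ, Fintype.card_fin, nsmul_eq_mul, mul_comm]
  have part1 : ∀ ε > 0, Tendsto (fun n => P {ω | ε < ‖lamSB n ω - lam‖}) atTop (nhds 0) := by
    intro ε hε
    refine tendsto_of_tendsto_of_tendsto_of_le_of_le tendsto_const_nhds (hprob ε hε)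
      (fun n => zero_le) (fun n => measure_mono ?_)
    intro ω hω
    simp only [Set.mem_setOf_eq] at hω ⊢
    exact lt_of_lt_of_le hω (hnorm n ω)
  refine ⟨part1, ?_⟩
  intro ε hε
  obtain ⟨δ, hδpos, hδ⟩ := key hd hc hε
  refine tendsto_of_tendsto_of_tendsto_of_le_of_le tendsto_const_nhds (part1 δ hδpos)
    (fun n => zero_le) (fun n => measure_mono ?_)
  intro ω hω
  simp only [Set.mem_setOf_eq] at hω ⊢
  by_contra hcon
  push_neg at hcon
  have hSBnorm : ‖lamSB n ω - lam‖ = |(∑ j, lamHat n ω j) / d - c| := by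
    have heq : lamSB n ω - lam = fun _ : Fin d => (∑ j, lamHat n ω j) / d - c := by
      rw [hSB, hlam]; rfl
    rw [heq, pi_norm_const, Real.norm_eq_abs]
  have hmc : |(∑ j, lamHat n ω j) / d - c| ≤ δ := by rw [← hSBnorm]; exact hcon
  have := hδ ((∑ j, lamHat n ω j) / d) (T n ω) hmc
  rw [hSB n ω, hlam] at hω
  have habs : |(1 - mixCDF d (fun _ => (∑ j, lamHat n ω j) / d) (T n ω)) -
      (1 - mixCDF d (fun _ => c) (T n ω))|
      = |mixCDF d (fun _ => (∑ j, lamHat n ω j) / d) (T n ω) -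
        mixCDF d (fun _ => c) (T n ω)| := by
    rw [← abs_neg]; congr 1; ring
  rw [habs] at hω
  linarith
end

section
/- Let d be a positive integer and let λ = (λ_1, …, λ_d) be a vector with strictly positive entries. Let (T_n) be a sequence of real-valued random variables converging in distribution to Σ_{j=1}^d λ_j Z_j², where Z_1, …, Z_d are independent standard normal random variables, and let (λ̂_n) be a sequence of random vectors in ℝ^d converging in probability to λ. Define p̂_n = 1 − H(T_n; λ̂_n). Then for every significance level α ∈ (0, 1), the Type I error rate P(p̂_n ≤ α) converges to α as n → ∞. -/
open MeasureTheory ProbabilityTheory Filter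
open Set

section aux
variable {d : ℕ}

lemma measurable_mixFun (lam : Fin d → ℝ) :
    Measurable fun z : Fin d → ℝ => ∑ j, lam j * z j ^ 2 :=
  Finset.measurable_sum _ fun j _ => ((measurable_pi_apply j).pow_const 2).const_mul _

lemma continuous_mixFun (lam : Fin d → ℝ) :
    Continuous fun z : Fin d → ℝ => ∑ j, lam j * z j ^ 2 :=
  continuous_finset_sum _ fun j _ => continuous_const.mul ((continuous_apply j).pow 2)

instance inst_s15 (d : ℕ) : IsProbabilityMeasure (stdGaussPi d) := by
  unfold stdGaussPi; infer_instance

instance (d : ℕ) (lam : Fin d → ℝ) : IsProbabilityMeasure (mixLaw d lam) :=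
  Measure.isProbabilityMeasure_map (measurable_mixFun lam).aemeasurable

instance : (gaussianReal 0 1).IsOpenPosMeasure := by
  constructor
  intro U hU hne h0
  exact hU.measure_ne_zero volume hne ((gaussianReal_absolutelyContinuous' 0 one_ne_zero) h0)

instance (d : ℕ) : (stdGaussPi d).IsOpenPosMeasure := by
  unfold stdGaussPi; infer_instance

lemma stdGaussPi_level {m : ℕ} (lam : Fin (m + 1) → ℝ) (hlam : ∀ j, lam j ≠ 0) (q : ℝ) :
    stdGaussPi (m + 1) {z | ∑ j, lam j * z j ^ 2 = q} = 0 := by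
  classical
  set e := MeasurableEquiv.piFinSuccAbove (fun _ : Fin (m + 1) => ℝ) 0 with he
  have mp := measurePreserving_piFinSuccAbove (fun _ : Fin (m + 1) => gaussianReal 0 1) 0
  set S' : Set (ℝ × (Fin m → ℝ)) :=
    {p | lam 0 * p.1 ^ 2 + ∑ j, lam (Fin.succ j) * p.2 j ^ 2 = q} with hS'
  have hS'meas : MeasurableSet S' := by
    apply measurableSet_eq_fun
    · exact (measurable_fst.pow_const 2).const_mul _ |>.add
        (Finset.measurable_sum _ fun j _ =>
          ((measurable_snd.eval (a := j)).pow_const 2).const_mul _)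
    · exact measurable_const
  have hpre : {z : Fin (m + 1) → ℝ | ∑ j, lam j * z j ^ 2 = q} = e ⁻¹' S' := by
    ext z
    simp only [Set.mem_preimage, hS', Set.mem_setOf_eq, he,
      MeasurableEquiv.piFinSuccAbove, MeasurableEquiv.coe_mk,
      Equiv.symm_symm, Fin.insertNthEquiv, Equiv.coe_fn_symm_mk]
    rw [Fin.sum_univ_succ]
    simp [Fin.succAbove, Fin.tail]
  rw [hpre]
  unfold stdGaussPi
  rw [mp.measure_preimage hS'meas.nullMeasurableSet]
  rw [Measure.prod_apply_symm hS'meas]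
  have hzero : ∀ y : Fin m → ℝ,
      gaussianReal 0 1 ((fun x => (x, y)) ⁻¹' S') = 0 := by
    intro y
    set c := (q - ∑ j, lam (Fin.succ j) * y j ^ 2) / lam 0 with hc
    have hsub : ((fun x => (x, y)) ⁻¹' S') ⊆ {Real.sqrt c, -Real.sqrt c} := by
      intro x hx
      simp only [Set.mem_preimage, hS', Set.mem_setOf_eq] at hx
      have hx2 : x ^ 2 = c := by
        rw [hc]
        field_simp [hlam 0]
        linarith
      have hcnn : 0 ≤ c := hx2 ▸ sq_nonneg x
      have : x ^ 2 = Real.sqrt c ^ 2 := by rw [Real.sq_sqrt hcnn, hx2]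
      have := sq_eq_sq_iff_eq_or_eq_neg.mp this
      · rcases this with h | h
        · exact Or.inl h
        · exact Or.inr h
    apply measure_mono_null hsub
    apply gaussianReal_absolutelyContinuous 0 one_ne_zero
    exact ((Set.finite_singleton _).insert _).measure_zero _
  simp_rw [hzero]
  simp
end aux

section aux2
variable {d : ℕ}

lemma mixLaw_singleton (hd : 0 < d) (lam : Fin d → ℝ) (hlam : ∀ j, lam j ≠ 0) (q : ℝ) :
    mixLaw d lam {q} = 0 := by
  obtain ⟨m, rfl⟩ := Nat.exists_eq_succ_of_ne_zero hd.ne'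
  rw [mixLaw, Measure.map_apply (measurable_mixFun lam) (measurableSet_singleton q)]
  have : (fun z : Fin (m + 1) → ℝ => ∑ j, lam j * z j ^ 2) ⁻¹' {q}
      = {z | ∑ j, lam j * z j ^ 2 = q} := by ext z; simp
  rw [this]
  exact stdGaussPi_level lam hlam q

lemma mixLaw_Iic (lam : Fin d → ℝ) (q : ℝ) :
    mixLaw d lam (Iic q) = stdGaussPi d {z | ∑ j, lam j * z j ^ 2 ≤ q} := by
  rw [mixLaw, Measure.map_apply (measurable_mixFun lam) measurableSet_Iic]
  rfl

lemma mixCDF_eq (lam : Fin d → ℝ) (q : ℝ) :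
    mixCDF d lam q = (mixLaw d lam (Iic q)).toReal := by
  rw [mixLaw_Iic, mixCDF]

lemma mixCDF_eq_cdf (lam : Fin d → ℝ) (q : ℝ) :
    mixCDF d lam q = cdf (mixLaw d lam) q := by
  rw [cdf_eq_real, measureReal_def, mixCDF_eq]

lemma mixCDF_smul (lam : Fin d → ℝ) {c : ℝ} (hc : 0 < c) (q : ℝ) :
    mixCDF d (fun j => c * lam j) q = mixCDF d lam (q / c) := by
  have hsum : ∀ z : Fin d → ℝ, ∑ j, c * lam j * z j ^ 2 = (∑ j, lam j * z j ^ 2) * c := by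
    intro z
    rw [Finset.sum_mul]
    exact Finset.sum_congr rfl fun j _ => by ring
  have hset : {z : Fin d → ℝ | ∑ j, c * lam j * z j ^ 2 ≤ q}
      = {z : Fin d → ℝ | ∑ j, lam j * z j ^ 2 ≤ q / c} := by
    ext z
    rw [Set.mem_setOf_eq, Set.mem_setOf_eq, hsum z, ← le_div_iff₀ hc]
  rw [mixCDF, mixCDF, hset]

lemma mixCDF_anti (lam1 lam2 : Fin d → ℝ) (h : ∀ j, lam1 j ≤ lam2 j) (q : ℝ) :
    mixCDF d lam2 q ≤ mixCDF d lam1 q := by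
  apply ENNReal.toReal_mono (measure_ne_top _ _)
  apply measure_mono
  intro z hz
  exact le_trans
    (Finset.sum_le_sum fun j _ => mul_le_mul_of_nonneg_right (h j) (sq_nonneg _)) hz

lemma mixCDF_mono (lam : Fin d → ℝ) : Monotone (mixCDF d lam) := by
  intro a b hab
  apply ENNReal.toReal_mono (measure_ne_top _ _)
  exact measure_mono fun z hz => le_trans hz hab

lemma mixCDF_zero (hd : 0 < d) (lam : Fin d → ℝ) (hlam : ∀ j, 0 < lam j) :
    mixCDF d lam 0 = 0 := by
  rw [mixCDF]
  obtain ⟨m, rfl⟩ := Nat.exists_eq_succ_of_ne_zero hd.ne'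
  have hsub : {z : Fin (m + 1) → ℝ | ∑ j, lam j * z j ^ 2 ≤ 0}
      ⊆ {z | ∑ j, lam j * z j ^ 2 = 0} := by
    intro z hz
    exact le_antisymm hz
      (Finset.sum_nonneg fun j _ => mul_nonneg (hlam j).le (sq_nonneg _))
  rw [measure_mono_null hsub (stdGaussPi_level lam (fun j => (hlam j).ne') 0)]
  simp

lemma continuous_mixCDF (hd : 0 < d) (lam : Fin d → ℝ) (hlam : ∀ j, 0 < lam j) :
    Continuous (mixCDF d lam) := by
  set ν := mixLaw d lam with hν
  have heq : mixCDF d lam = ⇑(cdf ν) := funext fun q => mixCDF_eq_cdf lam q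
  rw [heq, continuous_iff_continuousAt]
  intro x
  have hmono : Monotone ⇑(cdf ν) := monotone_cdf ν
  rw [hmono.continuousAt_iff_leftLim_eq_rightLim]
  have hr : Function.rightLim ⇑(cdf ν) x = cdf ν x := by
    rw [← hmono.continuousWithinAt_Ioi_iff_rightLim_eq]
    exact ((cdf ν).right_continuous x).mono Ioi_subset_Ici_self
  have hl : Function.leftLim ⇑(cdf ν) x = cdf ν x := by
    have hs := (cdf ν).measure_singleton x
    rw [measure_cdf, mixLaw_singleton hd lam (fun j => (hlam j).ne') x] at hs
    have h1 : cdf ν x - Function.leftLim ⇑(cdf ν) x ≤ 0 := by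
      by_contra hcon
      push_neg at hcon
      exact absurd hs.symm (by simp [ENNReal.ofReal_eq_zero]; linarith)
    have h2 := hmono.leftLim_le (le_refl x)
    linarith
  rw [hl, hr]

lemma mixCDF_strict (hd : 0 < d) (lam : Fin d → ℝ) (hlam : ∀ j, 0 < lam j)
    {a b : ℝ} (ha : 0 ≤ a) (hab : a < b) :
    mixCDF d lam a < mixCDF d lam b := by
  set ν := mixLaw d lam with hν
  have hIoc : ν (Ioc a b) ≠ 0 := by
    have hmap : ν (Ioc a b) = stdGaussPi d
        ((fun z : Fin d → ℝ => ∑ j, lam j * z j ^ 2) ⁻¹' Ioc a b) := by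
      rw [hν, mixLaw, Measure.map_apply (measurable_mixFun lam) measurableSet_Ioc]
    rw [hmap]
    have hopen : IsOpen ((fun z : Fin d → ℝ => ∑ j, lam j * z j ^ 2) ⁻¹' Ioo a b) :=
      isOpen_Ioo.preimage (continuous_mixFun lam)
    have hne : ((fun z : Fin d → ℝ => ∑ j, lam j * z j ^ 2) ⁻¹' Ioo a b).Nonempty := by
      have hd' : (Finset.univ : Finset (Fin d)).Nonempty := by
        simpa [Finset.univ_nonempty_iff] using Fin.pos_iff_nonempty.mp hd
      set S := ∑ j, lam j with hS
      have hSpos : 0 < S := Finset.sum_pos (fun j _ => hlam j) hd'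
      refine ⟨fun _ => Real.sqrt (((a + b) / 2) / S), ?_⟩
      have hnn : 0 ≤ ((a + b) / 2) / S := by
        apply div_nonneg _ hSpos.le
        linarith
      have hval : (∑ j, lam j * Real.sqrt (((a + b) / 2) / S) ^ 2) = (a + b) / 2 := by
        rw [Real.sq_sqrt hnn, ← Finset.sum_mul, ← hS]
        field_simp
      simp only [Set.mem_preimage, hval, Set.mem_Ioo]
      constructor <;> linarith
    intro h0
    have hz : stdGaussPi d ((fun z : Fin d → ℝ => ∑ j, lam j * z j ^ 2) ⁻¹' Ioo a b) = 0 :=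
      measure_mono_null (fun z hz => by
        simp only [Set.mem_preimage, Set.mem_Ioo, Set.mem_Ioc] at *
        exact ⟨hz.1, hz.2.le⟩) h0
    exact (hopen.measure_pos (stdGaussPi d) hne).ne' hz
  rw [mixCDF_eq, mixCDF_eq]
  apply ENNReal.toReal_strict_mono (measure_ne_top _ _)
  have hunion : Iic a ∪ Ioc a b = Iic b := Iic_union_Ioc_eq_Iic hab.le
  calc ν (Iic a) < ν (Iic a) + ν (Ioc a b) :=
        ENNReal.lt_add_right (measure_ne_top _ _) hIoc
    _ = ν (Iic b) := by
        rw [← measure_union (Iic_disjoint_Ioc le_rfl) measurableSet_Ioc, hunion]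

end aux2


section aux3
variable {d : ℕ}

lemma mixLaw_Ici_toReal (hd : 0 < d) (lam : Fin d → ℝ) (hlam : ∀ j, 0 < lam j) (t : ℝ) :
    (mixLaw d lam (Ici t)).toReal = 1 - mixCDF d lam t := by
  set ν := mixLaw d lam with hν
  have h1 : ν (Iio t) + ν (Ici t) = 1 := by
    rw [← measure_union (Iio_disjoint_Ici le_rfl) measurableSet_Ici, Iio_union_Ici,
      measure_univ]
  have h2 : ν (Iic t) = ν (Iio t) := by
    apply le_antisymm
    · calc ν (Iic t) ≤ ν (Iio t ∪ {t}) := measure_mono (by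
            intro x hx
            rcases lt_or_eq_of_le (Set.mem_Iic.mp hx) with h | h
            · exact Or.inl h
            · exact Or.inr h)
      _ ≤ ν (Iio t) + ν {t} := measure_union_le _ _
      _ = ν (Iio t) := by
          rw [mixLaw_singleton hd lam (fun j => (hlam j).ne') t, add_zero]
    · exact measure_mono Iio_subset_Iic_self
  have h3 : (ν (Iio t)).toReal + (ν (Ici t)).toReal = 1 := by
    rw [← ENNReal.toReal_add (measure_ne_top _ _) (measure_ne_top _ _), h1]
    simp
  have h4 : mixCDF d lam t = (ν (Iio t)).toReal := by
    rw [mixCDF_eq, h2]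
  linarith

lemma port {Ω : Type*} [MeasurableSpace Ω] (P : Measure Ω) [IsProbabilityMeasure P]
    (hd : 0 < d) (lam : Fin d → ℝ) (hlam : ∀ j, 0 < lam j)
    (T : ℕ → Ω → ℝ) (hT : ∀ n, Measurable (T n))
    (hTdist : ∀ g : BoundedContinuousFunction ℝ ℝ,
      Tendsto (fun n => ∫ ω, g (T n ω) ∂P) atTop (nhds (∫ x, g x ∂(mixLaw d lam))))
    (t : ℝ) :
    Tendsto (fun n => (P {ω | t ≤ T n ω}).toReal) atTop
      (nhds ((mixLaw d lam (Ici t)).toReal)) := by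
  have hmap : ∀ n, IsProbabilityMeasure (P.map (T n)) := fun n =>
    Measure.isProbabilityMeasure_map (hT n).aemeasurable
  let μs : ℕ → ProbabilityMeasure ℝ := fun n => ⟨P.map (T n), hmap n⟩
  let μ0 : ProbabilityMeasure ℝ := ⟨mixLaw d lam, inferInstance⟩
  have hlim : Tendsto μs atTop (nhds μ0) := by
    rw [ProbabilityMeasure.tendsto_iff_forall_integral_tendsto]
    intro f
    have hint : ∀ n, ∫ x, f x ∂(μs n : Measure ℝ) = ∫ ω, f (T n ω) ∂P := fun n =>
      integral_map (hT n).aemeasurable f.continuous.aestronglyMeasurable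
    simp_rw [hint]
    exact hTdist f
  have hbdry : (μ0 : Measure ℝ) (frontier (Ici t)) = 0 := by
    rw [frontier_Ici]
    exact mixLaw_singleton hd lam (fun j => (hlam j).ne') t
  have key := MeasureTheory.ProbabilityMeasure.tendsto_measure_of_null_frontier_of_tendsto'
    hlim hbdry
  have heq : ∀ n, (μs n : Measure ℝ) (Ici t) = P {ω | t ≤ T n ω} := by
    intro n
    show (P.map (T n)) (Ici t) = _
    rw [Measure.map_apply (hT n) measurableSet_Ici]
    rfl
  simp_rw [heq] at key
  exact (ENNReal.tendsto_toReal (measure_ne_top _ _)).comp key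

end aux3

theorem stmt15 {Ω : Type*} [MeasurableSpace Ω] (P : Measure Ω) [IsProbabilityMeasure P]
    (d : ℕ) (hd : 0 < d) (lam : Fin d → ℝ) (hlam : ∀ j, 0 < lam j)
    (T : ℕ → Ω → ℝ) (hT : ∀ n, Measurable (T n))
    (hTdist : ∀ g : BoundedContinuousFunction ℝ ℝ,
      Tendsto (fun n => ∫ ω, g (T n ω) ∂P) atTop (nhds (∫ x, g x ∂(mixLaw d lam))))
    (lamHat : ℕ → Ω → Fin d → ℝ) (hlamHat : ∀ n, Measurable (lamHat n))
    (hprob : ∀ ε > 0, Tendsto (fun n => P {ω | ε < ‖lamHat n ω - lam‖}) atTop (nhds 0)) :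
    ∀ α ∈ Set.Ioo (0 : ℝ) 1,
      Tendsto
        (fun n => (P {ω | 1 - mixCDF d (lamHat n ω) (T n ω) ≤ α}).toReal)
        atTop (nhds α) := by

  intro α hα
  obtain ⟨hα0, hα1⟩ := hα
  set F := mixCDF d lam with hFdef
  have hFcont : Continuous F := continuous_mixCDF hd lam hlam
  have hF0 : F 0 = 0 := mixCDF_zero hd lam hlam
  have htop : Tendsto F atTop (nhds 1) := by
    have hcdf : F = ⇑(cdf (mixLaw d lam)) := funext fun x => mixCDF_eq_cdf lam x
    rw [hcdf]
    exact tendsto_cdf_atTop (mixLaw d lam)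
  obtain ⟨M, hM⟩ := (htop.eventually_const_lt (show 1 - α < 1 by linarith)).exists
  have h0M : (0 : ℝ) ≤ M := by
    by_contra h
    push_neg at h
    have hFM : F M ≤ F 0 := mixCDF_mono lam h.le
    rw [hF0] at hFM
    linarith
  have hIVT : (1 - α) ∈ F '' (Set.Icc 0 M) :=
    intermediate_value_Icc h0M hFcont.continuousOn ⟨by rw [hF0]; linarith, hM.le⟩
  obtain ⟨q, hqmem, hFq⟩ := hIVT
  have hq0 : 0 < q := by
    rcases eq_or_lt_of_le hqmem.1 with h | h
    · exfalso
      rw [← h, hF0] at hFq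
      linarith
    · exact h
  have hchar : ∀ x : ℝ, 1 - α ≤ F x ↔ q ≤ x := by
    intro x
    constructor
    · intro h
      by_contra hx
      push_neg at hx
      rcases le_or_gt 0 x with h0x | h0x
      · have hstrict : F x < F q := mixCDF_strict hd lam hlam h0x hx
        rw [hFq] at hstrict
        linarith
      · have hle : F x ≤ F 0 := mixCDF_mono lam h0x.le
        rw [hF0] at hle
        linarith
    · intro h
      calc 1 - α = F q := hFq.symm
        _ ≤ F x := mixCDF_mono lam h
  have hne : (Finset.univ : Finset (Fin d)).Nonempty := by
    simpa [Finset.univ_nonempty_iff] using Fin.pos_iff_nonempty.mp hd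
  set lmin := Finset.univ.inf' hne lam with hlmin
  have hlmin_pos : 0 < lmin := by
    rw [hlmin, Finset.lt_inf'_iff]
    exact fun j _ => hlam j
  have hlmin_le : ∀ j, lmin ≤ lam j := fun j => Finset.inf'_le _ (Finset.mem_univ j)
  rw [Metric.tendsto_nhds]
  intro ε hε
  obtain ⟨δq, hδq, hδqball⟩ :=
    Metric.continuousAt_iff.mp (hFcont.continuousAt (x := q)) (ε / 4) (by linarith)
  set η := min (1 / 2 : ℝ) (δq / (2 * q)) with hη
  have hη0 : 0 < η := lt_min (by norm_num) (div_pos hδq (by linarith))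
  have hη1 : η < 1 := lt_of_le_of_lt (min_le_left _ _) (by norm_num)
  have hηq : ∀ c : ℝ, c = 1 - η ∨ c = 1 + η → |F (c * q) - (1 - α)| < ε / 4 := by
    intro c hc
    have habs : |c * q - q| = η * q := by
      rcases hc with rfl | rfl
      · rw [abs_of_nonpos (by nlinarith)]; ring
      · rw [abs_of_nonneg (by nlinarith)]; ring
    have hdist : dist (c * q) q < δq := by
      rw [Real.dist_eq, habs]
      have hηle : η ≤ δq / (2 * q) := min_le_right _ _
      have h1 : η * q ≤ δq / (2 * q) * q := mul_le_mul_of_nonneg_right hηle hq0.le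
      have h2 : δq / (2 * q) * q = δq / 2 := by
        field_simp
      linarith
    have := hδqball hdist
    rwa [Real.dist_eq, hFq] at this
  set δ := η * lmin with hδdef
  have hδ0 : 0 < δ := mul_pos hη0 hlmin_pos
  -- componentwise bounds on the event of good estimation
  have hbound : ∀ (v : Fin d → ℝ), ‖v - lam‖ ≤ δ →
      (∀ j, (1 - η) * lam j ≤ v j) ∧ (∀ j, v j ≤ (1 + η) * lam j) := by
    intro v hv
    have hcomp : ∀ j, |v j - lam j| ≤ η * lam j := by
      intro j
      have h1 : ‖(v - lam) j‖ ≤ ‖v - lam‖ := norm_le_pi_norm (v - lam) j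
      have h2 : |v j - lam j| ≤ δ := by
        rw [Pi.sub_apply, Real.norm_eq_abs] at h1
        linarith
      have h3 : η * lmin ≤ η * lam j := mul_le_mul_of_nonneg_left (hlmin_le j) hη0.le
      rw [hδdef] at h2
      linarith
    constructor <;> intro j <;> have := abs_le.mp (hcomp j) <;>
      [nlinarith [this.1]; nlinarith [this.2]]
  -- sandwich implications
  have hlo : ∀ (n : ℕ) (ω : Ω), ‖lamHat n ω - lam‖ ≤ δ → (1 + η) * q ≤ T n ω →
      1 - mixCDF d (lamHat n ω) (T n ω) ≤ α := by
    intro n ω hG hTn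
    obtain ⟨_, hub⟩ := hbound (lamHat n ω) hG
    have hstep1 : mixCDF d (fun j => (1 + η) * lam j) (T n ω)
        ≤ mixCDF d (lamHat n ω) (T n ω) :=
      mixCDF_anti (lamHat n ω) (fun j => (1 + η) * lam j) hub (T n ω)
    have hstep2 : mixCDF d (fun j => (1 + η) * lam j) (T n ω)
        = F (T n ω / (1 + η)) := mixCDF_smul lam (by linarith) (T n ω)
    have hstep3 : q ≤ T n ω / (1 + η) := by
      rw [le_div_iff₀ (by linarith : (0:ℝ) < 1 + η)]
      linarith [hTn]
    have hstep4 : 1 - α ≤ F (T n ω / (1 + η)) := (hchar _).mpr hstep3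
    linarith [hstep1, hstep2 ▸ hstep4]
  have hup : ∀ (n : ℕ) (ω : Ω), ‖lamHat n ω - lam‖ ≤ δ →
      1 - mixCDF d (lamHat n ω) (T n ω) ≤ α → (1 - η) * q ≤ T n ω := by
    intro n ω hG hA
    obtain ⟨hlb, _⟩ := hbound (lamHat n ω) hG
    have hstep1 : mixCDF d (lamHat n ω) (T n ω)
        ≤ mixCDF d (fun j => (1 - η) * lam j) (T n ω) :=
      mixCDF_anti (fun j => (1 - η) * lam j) (lamHat n ω) hlb (T n ω)
    have hstep2 : mixCDF d (fun j => (1 - η) * lam j) (T n ω)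
        = F (T n ω / (1 - η)) := mixCDF_smul lam (by linarith) (T n ω)
    have hstep4 : 1 - α ≤ F (T n ω / (1 - η)) := by
      rw [← hstep2]
      linarith
    have hstep5 : q ≤ T n ω / (1 - η) := (hchar _).mp hstep4
    rw [le_div_iff₀ (by linarith : (0:ℝ) < 1 - η)] at hstep5
    linarith
  -- events
  have key : ∀ (A B C : Set Ω), A ⊆ B ∪ C →
      (P A).toReal ≤ (P B).toReal + (P C).toReal := by
    intro A B C hsub
    rw [← ENNReal.toReal_add (measure_ne_top _ _) (measure_ne_top _ _)]
    exact ENNReal.toReal_mono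
      (ENNReal.add_ne_top.mpr ⟨measure_ne_top _ _, measure_ne_top _ _⟩)
      ((measure_mono hsub).trans (measure_union_le _ _))
  have hsub1 : ∀ n, {ω | 1 - mixCDF d (lamHat n ω) (T n ω) ≤ α}
      ⊆ {ω | (1 - η) * q ≤ T n ω} ∪ {ω | δ < ‖lamHat n ω - lam‖} := by
    intro n ω hω
    by_cases hb : δ < ‖lamHat n ω - lam‖
    · exact Or.inr hb
    · push_neg at hb
      exact Or.inl (hup n ω hb hω)
  have hsub2 : ∀ n, {ω | (1 + η) * q ≤ T n ω}
      ⊆ {ω | 1 - mixCDF d (lamHat n ω) (T n ω) ≤ α} ∪ {ω | δ < ‖lamHat n ω - lam‖} := by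
    intro n ω hω
    by_cases hb : δ < ‖lamHat n ω - lam‖
    · exact Or.inr hb
    · push_neg at hb
      exact Or.inl (hlo n ω hb hω)
  -- limits
  have hU : Tendsto (fun n => (P {ω | (1 - η) * q ≤ T n ω}).toReal) atTop
      (nhds (1 - F ((1 - η) * q))) := by
    have := port P hd lam hlam T hT hTdist ((1 - η) * q)
    rwa [mixLaw_Ici_toReal hd lam hlam] at this
  have hL : Tendsto (fun n => (P {ω | (1 + η) * q ≤ T n ω}).toReal) atTop
      (nhds (1 - F ((1 + η) * q))) := by
    have := port P hd lam hlam T hT hTdist ((1 + η) * q)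
    rwa [mixLaw_Ici_toReal hd lam hlam] at this
  have hB : Tendsto (fun n => (P {ω | δ < ‖lamHat n ω - lam‖}).toReal) atTop (nhds 0) := by
    have := (ENNReal.tendsto_toReal ENNReal.zero_ne_top).comp (hprob δ hδ0)
    simpa [Function.comp_def] using this
  have hUbd : 1 - F ((1 - η) * q) < α + ε / 4 := by
    have := hηq (1 - η) (Or.inl rfl)
    have := abs_lt.mp this
    linarith [this.1]
  have hLbd : α - ε / 4 < 1 - F ((1 + η) * q) := by
    have := hηq (1 + η) (Or.inr rfl)
    have := abs_lt.mp this
    linarith [this.2]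
  have ev1 := hU.eventually_lt_const (show 1 - F ((1 - η) * q) < 1 - F ((1 - η) * q) + ε / 4
    by linarith)
  have ev2 := hL.eventually_const_lt (show 1 - F ((1 + η) * q) - ε / 4 < 1 - F ((1 + η) * q)
    by linarith)
  have ev3 := hB.eventually_lt_const (show (0:ℝ) < ε / 4 by linarith)
  filter_upwards [ev1, ev2, ev3] with n h1 h2 h3
  have hb1 : (P {ω | 1 - mixCDF d (lamHat n ω) (T n ω) ≤ α}).toReal
      ≤ (P {ω | (1 - η) * q ≤ T n ω}).toReal
        + (P {ω | δ < ‖lamHat n ω - lam‖}).toReal := key _ _ _ (hsub1 n)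
  have hb2 : (P {ω | (1 + η) * q ≤ T n ω}).toReal
      ≤ (P {ω | 1 - mixCDF d (lamHat n ω) (T n ω) ≤ α}).toReal
        + (P {ω | δ < ‖lamHat n ω - lam‖}).toReal := key _ _ _ (hsub2 n)
  rw [Real.dist_eq, abs_lt]
  constructor
  · linarith
  · linarith
end
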